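/- arXiv:2508.20059 — 5 statements merged into one kernel-verified Lean document; each statement's English description precedes it below -/
import Mathlib

section
/- Let μ be a probability measure on a measurable space X and let g : X → ℝ be a bounded measurable function. Then the log moment generating function satisfies log ∫_X e^{g} dμ = sup over all probability measures p on X of ( ∫_X g dp − KL(p‖μ) ). -/
open MeasureTheory Classical

/-- Kullback–Leibler divergence: `∫ log(dp/dq) dp` when `p ≪ q` (and the
integrand is `p`-integrable), and `+∞` otherwise. -/
noncomputable def klDiv {Ω : Type*} [MeasurableSpace Ω] (p q : Measure Ω) : EReal :=
  if p ≪ q ∧ Integrable (fun ω => Real.log (p.rnDeriv q ω).toReal) p then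
    ((∫ ω, Real.log (p.rnDeriv q ω).toReal ∂p : ℝ) : EReal)
  else ⊤

lemma kl_nonneg_aux {Ω : Type*} [MeasurableSpace Ω] (p q : Measure Ω)
    [IsProbabilityMeasure p] [IsProbabilityMeasure q] (hpq : p ≪ q)
    (hint : Integrable (llr p q) p) : 0 ≤ ∫ x, llr p q x ∂p := by
  have hneg : Integrable (llr q p) p :=
    (integrable_congr (neg_llr hpq)).mp hint.neg
  have hle : ∀ᵐ x ∂p, llr q p x ≤ (q.rnDeriv p x).toReal - 1 := by
    filter_upwards [Measure.rnDeriv_pos' hpq, Measure.rnDeriv_lt_top q p] with x h1 h2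
    exact Real.log_le_sub_one_of_pos (ENNReal.toReal_pos h1.ne' h2.ne)
  have hintr : Integrable (fun x => (q.rnDeriv p x).toReal - 1) p :=
    (Measure.integrable_toReal_rnDeriv).sub (integrable_const 1)
  have h2 : ∫ x, llr q p x ∂p ≤ ∫ x, (q.rnDeriv p x).toReal - 1 ∂p :=
    integral_mono_ae hneg hintr hle
  have h3 : ∫ x, (q.rnDeriv p x).toReal - 1 ∂p ≤ 0 := by
    rw [integral_sub Measure.integrable_toReal_rnDeriv (integrable_const 1)]
    have := Measure.integral_toReal_rnDeriv' (μ := q) (ν := p)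
    simp only [integral_const, measureReal_def, measure_univ, ENNReal.toReal_one, smul_eq_mul, one_mul] at *
    rw [this]
    have : ((q.singularPart p) Set.univ).toReal ≥ 0 := ENNReal.toReal_nonneg
    linarith
  have h4 : ∫ x, llr p q x ∂p = - ∫ x, llr q p x ∂p := by
    rw [← integral_neg]
    refine integral_congr_ae ?_
    filter_upwards [neg_llr hpq] with x hx
    simp only [Pi.neg_apply] at hx
    simp [← hx]
  rw [h4]
  linarith

theorem log_mgf_eq_sup_kl {X : Type*} [MeasurableSpace X]
    (μ : Measure X) [IsProbabilityMeasure μ]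
    (g : X → ℝ) (hg : Measurable g) (hb : ∃ C : ℝ, ∀ x, |g x| ≤ C) :
    (Real.log (∫ x, Real.exp (g x) ∂μ) : EReal) =
      ⨆ (p : Measure X) (_ : IsProbabilityMeasure p),
        (((∫ x, g x ∂p : ℝ) : EReal) - klDiv p μ) := by
  obtain ⟨C, hC⟩ := hb
  -- exp(g) is integrable w.r.t. any finite measure
  have hexp : ∀ (ν : Measure X) [IsFiniteMeasure ν], Integrable (fun x => Real.exp (g x)) ν := by
    intro ν _
    refine Integrable.mono' (integrable_const (Real.exp C)) (hg.exp.aestronglyMeasurable) ?_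
    filter_upwards with x
    rw [Real.norm_eq_abs, abs_of_pos (Real.exp_pos _)]
    exact Real.exp_le_exp.mpr ((abs_le.mp (hC x)).2)
  have hgint : ∀ (ν : Measure X) [IsFiniteMeasure ν], Integrable g ν := by
    intro ν _
    exact Integrable.mono' (integrable_const C) hg.aestronglyMeasurable
      (Filter.Eventually.of_forall fun x => hC x)
  set Z : ℝ := ∫ x, Real.exp (g x) ∂μ with hZ
  set q : Measure X := μ.tilted g with hq
  have hqP : IsProbabilityMeasure q := isProbabilityMeasure_tilted (hexp μ)
  have hqac : q ≪ μ := tilted_absolutelyContinuous μ g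
  have hμq : μ ≪ q := absolutelyContinuous_tilted (hexp μ)
  -- llr q μ = g - log Z a.e. μ
  have hllrq : llr q μ =ᵐ[μ] fun x => g x - Real.log Z :=
    log_rnDeriv_tilted_left_self (hexp μ)
  have hllrq' : llr q μ =ᵐ[q] fun x => g x - Real.log Z := hqac.ae_le hllrq
  have hqint : Integrable (llr q μ) q :=
    (integrable_congr hllrq'.symm).mp ((hgint q).sub (integrable_const _))
  have hklq : klDiv q μ = ((∫ x, g x ∂q - Real.log Z : ℝ) : EReal) := by
    rw [klDiv, if_pos ⟨hqac, hqint⟩]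
    congr 1
    rw [show (fun ω => Real.log (q.rnDeriv μ ω).toReal) = llr q μ from rfl,
      integral_congr_ae hllrq', integral_sub (hgint q) (integrable_const _)]
    simp
  apply le_antisymm
  · -- lower bound: take p = q
    refine le_trans ?_ (le_iSup₂ (f := fun (p : Measure X) (_ : IsProbabilityMeasure p) =>
      (((∫ x, g x ∂p : ℝ) : EReal) - klDiv p μ)) q hqP)
    rw [hklq, ← EReal.coe_sub]
    norm_num
  · -- upper bound
    refine iSup₂_le fun p hp => ?_
    by_cases h : p ≪ μ ∧ Integrable (fun ω => Real.log (p.rnDeriv μ ω).toReal) p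
    · obtain ⟨hpac, hpint⟩ := h
      have hpint' : Integrable (llr p μ) p := hpint
      have hpq : p ≪ q := hpac.trans hμq
      have hintq : Integrable (llr p q) p :=
        integrable_llr_tilted_right hpac (hgint p) hpint' (hexp μ)
      have h0 : 0 ≤ ∫ x, llr p q x ∂p := kl_nonneg_aux p q hpq hintq
      have heq : ∫ x, llr p q x ∂p = ∫ x, llr p μ x ∂p - ∫ x, g x ∂p + Real.log Z :=
        integral_llr_tilted_right hpac (hgint p) (hexp μ) hpint'
      rw [klDiv, if_pos ⟨hpac, hpint⟩, ← EReal.coe_sub, EReal.coe_le_coe_iff]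
      have : (∫ ω, Real.log (p.rnDeriv μ ω).toReal ∂p) = ∫ x, llr p μ x ∂p := rfl
      rw [this]
      linarith [heq ▸ h0]
    · rw [klDiv, if_neg h]
      rw [show (((∫ x, g x ∂p : ℝ) : EReal) - ⊤) = ⊥ from EReal.sub_top _]
      exact bot_le
end

section
/- Let μ be a probability measure on a measurable space X and let g : X → ℝ be a bounded measurable function, so that Λ := log ∫_X e^{g} dμ is finite. Then the supremum sup_p { ∫ g dp − KL(p‖μ) } over probability measures p on X is attained by the probability measure p* that is absolutely continuous with respect to μ with density dp*/dμ = e^{g − Λ}; that is, ∫ g dp* − KL(p*‖μ) = Λ. -/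
open MeasureTheory Classical

/-- The supremum `sup_p { ∫ g dp − KL(p‖μ) }` is attained by the probability
measure `p*` with density `dp*/dμ = exp (g − Λ)`, where `Λ = log ∫ e^g dμ`:
one has `∫ g dp* − KL(p*‖μ) = Λ`. -/
theorem log_mgf_sup_attained {X : Type*} [MeasurableSpace X]
    (μ : Measure X) [IsProbabilityMeasure μ]
    (g : X → ℝ) (hg : Measurable g) (hb : ∃ C : ℝ, ∀ x, |g x| ≤ C)
    (Λ : ℝ) (hΛ : Λ = Real.log (∫ x, Real.exp (g x) ∂μ))
    (pstar : Measure X)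
    (hpstar : pstar = μ.withDensity (fun x => ENNReal.ofReal (Real.exp (g x - Λ)))) :
    IsProbabilityMeasure pstar ∧ pstar ≪ μ ∧
      (((∫ x, g x ∂pstar : ℝ) : EReal) - klDiv pstar μ) = (Λ : EReal) := by
  obtain ⟨C, hC⟩ := hb
  have hgint : Integrable (fun x => Real.exp (g x)) μ := by
    refine Integrable.mono' (integrable_const (Real.exp C)) (hg.exp.aestronglyMeasurable) ?_
    filter_upwards with x
    rw [Real.norm_eq_abs, abs_of_pos (Real.exp_pos _)]
    exact Real.exp_le_exp.2 ((abs_le.1 (hC x)).2)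
  have hgint' : Integrable (fun x => Real.exp (g x - Λ)) μ := by
    simpa [Real.exp_sub, div_eq_mul_inv] using hgint.mul_const (Real.exp Λ)⁻¹
  have hpos : 0 < ∫ x, Real.exp (g x) ∂μ := integral_exp_pos hgint
  have hexpΛ : Real.exp Λ = ∫ x, Real.exp (g x) ∂μ := by
    rw [hΛ, Real.exp_log hpos]
  have hint1 : ∫ x, Real.exp (g x - Λ) ∂μ = 1 := by
    simp only [Real.exp_sub, div_eq_mul_inv]
    rw [integral_mul_const, ← hexpΛ, mul_inv_cancel₀ (Real.exp_pos Λ).ne']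
  have hfmeas : Measurable (fun x => ENNReal.ofReal (Real.exp (g x - Λ))) :=
    ENNReal.measurable_ofReal.comp ((hg.sub measurable_const).exp)
  have hprob : IsProbabilityMeasure pstar := by
    constructor
    rw [hpstar, withDensity_apply _ MeasurableSet.univ, Measure.restrict_univ,
      ← ofReal_integral_eq_lintegral_ofReal hgint'
        (Filter.Eventually.of_forall fun x => (Real.exp_pos _).le), hint1, ENNReal.ofReal_one]
  have hac : pstar ≪ μ := hpstar ▸ withDensity_absolutelyContinuous μ _
  have hrn : (fun x => Real.log (pstar.rnDeriv μ x).toReal) =ᵐ[pstar]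
      fun x => g x - Λ := by
    have h1 : pstar.rnDeriv μ =ᵐ[μ] fun x => ENNReal.ofReal (Real.exp (g x - Λ)) := by
      rw [hpstar]; exact Measure.rnDeriv_withDensity μ hfmeas
    filter_upwards [hac h1] with x hx
    rw [hx, ENNReal.toReal_ofReal (Real.exp_pos _).le, Real.log_exp]
  haveI := hprob
  have hgintp : Integrable g pstar := by
    refine Integrable.mono' (integrable_const C) hg.aestronglyMeasurable ?_
    filter_upwards with x using (Real.norm_eq_abs (g x)) ▸ hC x
  have hsubint : Integrable (fun x => g x - Λ) pstar := hgintp.sub (integrable_const Λ)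
  have hlogint : Integrable (fun x => Real.log (pstar.rnDeriv μ x).toReal) pstar :=
    hsubint.congr hrn.symm
  have hkl : klDiv pstar μ = ((∫ x, g x ∂pstar - Λ : ℝ) : EReal) := by
    rw [klDiv, if_pos ⟨hac, hlogint⟩]
    congr 1
    rw [integral_congr_ae hrn, integral_sub hgintp (integrable_const Λ),
      integral_const, probReal_univ, smul_eq_mul, one_mul]
  refine ⟨hprob, hac, ?_⟩
  rw [hkl, ← EReal.coe_sub]
  norm_num
end

section
/- Define the probability measure π* on X×Y by its density with respect to μ1⊗μ2: dπ*/d(μ1⊗μ2)(x,y) = exp( (ℓ(x,y) − B(x)) / ε ), where B(x) = ε log ∫_Y exp(ℓ(x,y)/ε) dμ2(y). Then π* has first marginal μ1 and attains the infimum of ε·KL(π‖μ1⊗μ2) − ∫_{X×Y} ℓ dπ over all Borel probability measures π on X×Y with first marginal μ1; that is, ε·KL(π*‖μ1⊗μ2) − ∫ ℓ dπ* = −∫_X B dμ1. -/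
open MeasureTheory Classical

lemma integrable_of_abs_le {α : Type*} [MeasurableSpace α] (μ : Measure α) [IsFiniteMeasure μ]
    {f : α → ℝ} (hf : AEStronglyMeasurable f μ) {C : ℝ} (h : ∀ a, |f a| ≤ C) :
    Integrable f μ :=
  ⟨hf, HasFiniteIntegral.of_bounded (C := C) (ae_of_all _ fun a => by
    rw [Real.norm_eq_abs]; exact h a)⟩


/-- The measure `π*` with density `dπ*/d(μ1⊗μ2)(x,y) = exp((ℓ(x,y) − B(x))/ε)`
is a probability measure with first marginal `μ1`, and it attains the infimum of
`ε·KL(π‖μ1⊗μ2) − ∫ ℓ dπ` over probability measures with first marginal `μ1`: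
its value is `−∫ B dμ1`. -/
theorem mcot_dual_inf_attained
    {X Y : Type*} [MetricSpace X] [CompactSpace X] [MeasurableSpace X] [BorelSpace X]
    [MetricSpace Y] [CompactSpace Y] [MeasurableSpace Y] [BorelSpace Y]
    (μ1 : Measure X) [IsProbabilityMeasure μ1] (μ2 : Measure Y) [IsProbabilityMeasure μ2]
    (ε : ℝ) (hε : 0 < ε)
    (ℓ : X × Y → ℝ) (hℓ : Continuous ℓ) (hbd : ∃ C : ℝ, ∀ p, |ℓ p| ≤ C)
    (B : X → ℝ) (hB : ∀ x, B x = ε * Real.log (∫ y, Real.exp (ℓ (x, y) / ε) ∂μ2))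
    (πstar : Measure (X × Y))
    (hπstar : πstar = (μ1.prod μ2).withDensity
      (fun p => ENNReal.ofReal (Real.exp ((ℓ p - B p.1) / ε)))) :
    IsProbabilityMeasure πstar ∧ πstar.map Prod.fst = μ1 ∧
      ((ε : EReal) * klDiv πstar (μ1.prod μ2) - ((∫ p, ℓ p ∂πstar : ℝ) : EReal))
        = ((-∫ x, B x ∂μ1 : ℝ) : EReal) ∧
      (∀ (π : Measure (X × Y)), IsProbabilityMeasure π → π.map Prod.fst = μ1 →
        ((ε : EReal) * klDiv πstar (μ1.prod μ2) - ((∫ p, ℓ p ∂πstar : ℝ) : EReal))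
          ≤ ((ε : EReal) * klDiv π (μ1.prod μ2) - ((∫ p, ℓ p ∂π : ℝ) : EReal))) := by
  subst hπstar
  obtain ⟨C₀, hC₀⟩ := hbd
  set C := max C₀ 0 with hCdef
  have hC : ∀ p, |ℓ p| ≤ C := fun p => (hC₀ p).trans (le_max_left _ _)
  have hεne : ε ≠ 0 := hε.ne'
  set Z : X → ℝ := fun x => ∫ y, Real.exp (ℓ (x, y) / ε) ∂μ2 with hZdef
  -- integrability of the inner exponential
  have hcont : ∀ x : X, Continuous fun y => Real.exp (ℓ (x, y) / ε) := fun x =>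
    Real.continuous_exp.comp ((hℓ.comp (Continuous.prodMk_right x)).div_const ε)
  have hint : ∀ x : X, Integrable (fun y => Real.exp (ℓ (x, y) / ε)) μ2 := by
    intro x
    refine integrable_of_abs_le μ2 (hcont x).aestronglyMeasurable (C := Real.exp (C / ε)) ?_
    intro y
    rw [abs_of_pos (Real.exp_pos _)]
    exact Real.exp_le_exp.2 (by gcongr; exact (abs_le.1 (hC _)).2)
  have hZlb : ∀ x, Real.exp (-C / ε) ≤ Z x := by
    intro x
    have h := integral_mono (μ := μ2) (integrable_const (Real.exp (-C / ε))) (hint x)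
        (fun y => Real.exp_le_exp.2 (by gcongr; exact (abs_le.1 (hC _)).1))
    simpa using h
  have hZub : ∀ x, Z x ≤ Real.exp (C / ε) := by
    intro x
    have h := integral_mono (μ := μ2) (hint x) (integrable_const (Real.exp (C / ε)))
        (fun y => Real.exp_le_exp.2 (by gcongr; exact (abs_le.1 (hC _)).2))
    simpa using h
  have hZpos : ∀ x, 0 < Z x := fun x => lt_of_lt_of_le (Real.exp_pos _) (hZlb x)
  have hexpB : ∀ x, Real.exp (B x / ε) = Z x := by
    intro x
    rw [hB x, mul_div_cancel_left₀ _ hεne, Real.exp_log (hZpos x)]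
  have hBub : ∀ x, B x ≤ C := by
    intro x
    have h1 : Real.exp (B x / ε) ≤ Real.exp (C / ε) := (hexpB x).le.trans (hZub x)
    exact (div_le_div_iff_of_pos_right hε).1 (Real.exp_le_exp.1 h1)
  have hBlb : ∀ x, -C ≤ B x := by
    intro x
    have h1 : Real.exp (-C / ε) ≤ Real.exp (B x / ε) := (hZlb x).trans_eq (hexpB x).symm
    exact (div_le_div_iff_of_pos_right hε).1 (Real.exp_le_exp.1 h1)
  -- measurability
  have hZm : Measurable Z := by
    have : StronglyMeasurable fun p : X × Y => Real.exp (ℓ p / ε) :=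
      (Real.continuous_exp.comp (hℓ.div_const ε)).stronglyMeasurable
    exact this.integral_prod_right'.measurable
  have hBm : Measurable B := by
    have : B = fun x => ε * Real.log (Z x) := funext hB
    rw [this]
    exact measurable_const.mul (Real.measurable_log.comp hZm)
  have hgm : Measurable fun p : X × Y => (ℓ p - B p.1) / ε :=
    (hℓ.measurable.sub (hBm.comp measurable_fst)).div_const ε
  have hfm : Measurable fun p : X × Y => Real.exp ((ℓ p - B p.1) / ε) :=
    Real.measurable_exp.comp hgm
  have hf'm : Measurable fun p : X × Y => ENNReal.ofReal (Real.exp ((ℓ p - B p.1) / ε)) :=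
    ENNReal.measurable_ofReal.comp hfm
  -- density rewritten as exp(ℓ/ε)/Z
  have hfx : ∀ p : X × Y, Real.exp ((ℓ p - B p.1) / ε) = Real.exp (ℓ p / ε) / Z p.1 := by
    intro p
    rw [sub_div, Real.exp_sub, hexpB p.1]
  -- integrability of the density in y, and inner integral = 1
  have hfint2 : ∀ x, Integrable (fun y => Real.exp ((ℓ (x, y) - B x) / ε)) μ2 := by
    intro x
    have h : (fun y => Real.exp ((ℓ (x, y) - B x) / ε))
        = fun y => Real.exp (ℓ (x, y) / ε) / Z x := funext fun y => hfx (x, y)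
    rw [h]
    exact (hint x).div_const _
  have hfint1 : ∀ x, ∫ y, Real.exp ((ℓ (x, y) - B x) / ε) ∂μ2 = 1 := by
    intro x
    have h : (fun y => Real.exp ((ℓ (x, y) - B x) / ε))
        = fun y => Real.exp (ℓ (x, y) / ε) / Z x := funext fun y => hfx (x, y)
    rw [h, integral_div, div_self (hZpos x).ne']
  have hinner : ∀ x, ∫⁻ y, ENNReal.ofReal (Real.exp ((ℓ (x, y) - B x) / ε)) ∂μ2 = 1 := by
    intro x
    rw [← ofReal_integral_eq_lintegral_ofReal (hfint2 x)
      (ae_of_all _ fun y => (Real.exp_pos _).le), hfint1 x, ENNReal.ofReal_one]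
  -- probability measure
  have hprob : IsProbabilityMeasure ((μ1.prod μ2).withDensity
      (fun p => ENNReal.ofReal (Real.exp ((ℓ p - B p.1) / ε)))) := by
    constructor
    rw [withDensity_apply _ MeasurableSet.univ, Measure.restrict_univ,
      lintegral_prod _ hf'm.aemeasurable]
    simp only [hinner]
    simp
  -- marginal
  have hmarg : ((μ1.prod μ2).withDensity
      (fun p => ENNReal.ofReal (Real.exp ((ℓ p - B p.1) / ε)))).map Prod.fst = μ1 := by
    ext s hs
    rw [Measure.map_apply measurable_fst hs, withDensity_apply _ (measurable_fst hs),
      ← Set.prod_univ, ← Measure.prod_restrict, Measure.restrict_univ,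
      lintegral_prod _ hf'm.aemeasurable]
    simp only [hinner]
    simp
  set W := (μ1.prod μ2).withDensity
      (fun p => ENNReal.ofReal (Real.exp ((ℓ p - B p.1) / ε))) with hW
  haveI : IsProbabilityMeasure W := hprob
  have hac : W ≪ μ1.prod μ2 := by
    rw [hW]; exact withDensity_absolutelyContinuous _ _
  have hac' : μ1.prod μ2 ≪ W := by
    rw [hW]
    exact withDensity_absolutelyContinuous' hf'm.aemeasurable
      (ae_of_all _ fun p => (ENNReal.ofReal_pos.2 (Real.exp_pos _)).ne')
  have hrn : W.rnDeriv (μ1.prod μ2)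
      =ᵐ[μ1.prod μ2] fun p => ENNReal.ofReal (Real.exp ((ℓ p - B p.1) / ε)) := by
    rw [hW]; exact Measure.rnDeriv_withDensity _ hf'm
  have hgbound : ∀ p : X × Y, |(ℓ p - B p.1) / ε| ≤ 2 * C / ε := by
    intro p
    rw [abs_div, abs_of_pos hε]
    gcongr
    calc |ℓ p - B p.1| ≤ |ℓ p| + |B p.1| := abs_sub _ _
    _ ≤ C + C := add_le_add (hC p) (abs_le.2 ⟨hBlb p.1, hBub p.1⟩)
    _ = 2 * C := by ring
  have hgint : ∀ (π : Measure (X × Y)) [IsFiniteMeasure π],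
      Integrable (fun p => (ℓ p - B p.1) / ε) π := fun π _ =>
    integrable_of_abs_le π hgm.aestronglyMeasurable hgbound
  have hlint : ∀ (π : Measure (X × Y)) [IsFiniteMeasure π], Integrable ℓ π := fun π _ =>
    integrable_of_abs_le π hℓ.measurable.aestronglyMeasurable hC
  have hBfst : ∀ (π : Measure (X × Y)) [IsFiniteMeasure π],
      Integrable (fun p => B p.1) π := fun π _ =>
    integrable_of_abs_le π (hBm.comp measurable_fst).aestronglyMeasurable
      (fun p => abs_le.2 ⟨hBlb p.1, hBub p.1⟩)
  have hBtrans : ∀ (π : Measure (X × Y)), π.map Prod.fst = μ1 →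
      ∫ p, B p.1 ∂π = ∫ x, B x ∂μ1 := by
    intro π hmap
    rw [← hmap, integral_map measurable_fst.aemeasurable hBm.aestronglyMeasurable]
  have hlogW : (fun p => Real.log (W.rnDeriv (μ1.prod μ2) p).toReal)
      =ᵐ[W] fun p => (ℓ p - B p.1) / ε := by
    filter_upwards [hac.ae_le hrn] with p hp
    rw [hp, ENNReal.toReal_ofReal (Real.exp_pos _).le, Real.log_exp]
  have hWlogint : Integrable (fun p => Real.log (W.rnDeriv (μ1.prod μ2) p).toReal) W :=
    (hgint W).congr hlogW.symm
  have hklW : klDiv W (μ1.prod μ2)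
      = ((∫ p, (ℓ p - B p.1) / ε ∂W : ℝ) : EReal) := by
    rw [klDiv, if_pos ⟨hac, hWlogint⟩, integral_congr_ae hlogW]
  have hIW : ∫ p, (ℓ p - B p.1) / ε ∂W = (∫ p, ℓ p ∂W - ∫ x, B x ∂μ1) / ε := by
    rw [integral_div, integral_sub (hlint W) (hBfst W), hBtrans W hmarg]
  have hval : ((ε : EReal) * klDiv W (μ1.prod μ2) - ((∫ p, ℓ p ∂W : ℝ) : EReal))
      = ((-∫ x, B x ∂μ1 : ℝ) : EReal) := by
    rw [hklW, ← EReal.coe_mul, ← EReal.coe_sub]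
    norm_cast
    rw [hIW]
    field_simp
    ring
  refine ⟨hprob, hmarg, hval, ?_⟩
  intro π hπ hπmarg
  rw [hval]
  by_cases hcase : π ≪ μ1.prod μ2 ∧
      Integrable (fun p => Real.log (π.rnDeriv (μ1.prod μ2) p).toReal) π
  · haveI := hπ
    rw [klDiv, if_pos hcase]
    have hππW : π ≪ W := hcase.1.trans hac'
    have hmul := hcase.1.ae_le (Measure.rnDeriv_mul_rnDeriv (κ := μ1.prod μ2) hππW)
    have hrnπ := hcase.1.ae_le hrn
    haveI : π.HaveLebesgueDecomposition W := Measure.haveLebesgueDecomposition_of_finiteMeasure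
    have hpos := Measure.rnDeriv_pos hππW
    have hlt := hππW.ae_le (Measure.rnDeriv_lt_top π W)
    have hkey : (fun p => Real.log (π.rnDeriv W p).toReal)
        =ᵐ[π] fun p => Real.log (π.rnDeriv (μ1.prod μ2) p).toReal - (ℓ p - B p.1) / ε := by
      filter_upwards [hmul, hrnπ, hpos, hlt] with p h1 h2 h3 h4
      have h5 : (π.rnDeriv (μ1.prod μ2) p).toReal
          = (π.rnDeriv W p).toReal * Real.exp ((ℓ p - B p.1) / ε) := by
        rw [← h1, Pi.mul_apply, h2, ENNReal.toReal_mul,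
          ENNReal.toReal_ofReal (Real.exp_pos _).le]
      rw [h5, Real.log_mul (ENNReal.toReal_pos h3.ne' h4.ne).ne' (Real.exp_pos _).ne',
        Real.log_exp]
      ring
    have hllrint : Integrable (fun p => Real.log (π.rnDeriv W p).toReal) π :=
      (hcase.2.sub (hgint π)).congr hkey.symm
    have hinv := Measure.inv_rnDeriv hππW
    have hgibbs : 0 ≤ ∫ p, Real.log (π.rnDeriv W p).toReal ∂π := by
      have hle : (fun p => - Real.log (π.rnDeriv W p).toReal)
          ≤ᵐ[π] fun p => (W.rnDeriv π p).toReal - 1 := by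
        filter_upwards [hpos, hlt, hinv] with p h3 h4 h5
        have ht : 0 < (π.rnDeriv W p).toReal := ENNReal.toReal_pos h3.ne' h4.ne
        have hlog : Real.log (π.rnDeriv W p).toReal⁻¹ ≤ (π.rnDeriv W p).toReal⁻¹ - 1 :=
          Real.log_le_sub_one_of_pos (inv_pos.2 ht)
        rw [Real.log_inv] at hlog
        have h5' : (π.rnDeriv W p)⁻¹ = W.rnDeriv π p := by
          simpa [Pi.inv_apply] using h5
        rw [← h5', ENNReal.toReal_inv]
        exact hlog
      have h6 := integral_mono_ae hllrint.neg
        ((Measure.integrable_toReal_rnDeriv).sub (integrable_const 1)) hle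
      simp only [Pi.neg_apply, Pi.sub_apply, integral_neg] at h6
      have h8 := Measure.setIntegral_toReal_rnDeriv_le (μ := W) (ν := π) (s := Set.univ)
        (by simp)
      rw [setIntegral_univ] at h8
      have h7 : ∫ p, ((W.rnDeriv π p).toReal - 1) ∂π ≤ 0 := by
        rw [integral_sub Measure.integrable_toReal_rnDeriv (integrable_const 1)]
        simp only [integral_const, measure_univ, ENNReal.toReal_one, probReal_univ, smul_eq_mul, one_mul]
        simp only [measure_univ, ENNReal.toReal_one, probReal_univ] at h8
        linarith
      linarith
    have hIeq : ∫ p, Real.log (π.rnDeriv W p).toReal ∂π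
        = ∫ p, Real.log (π.rnDeriv (μ1.prod μ2) p).toReal ∂π
          - ∫ p, (ℓ p - B p.1) / ε ∂π := by
      rw [integral_congr_ae hkey, integral_sub hcase.2 (hgint π)]
    have hgπ : ∫ p, (ℓ p - B p.1) / ε ∂π = (∫ p, ℓ p ∂π - ∫ x, B x ∂μ1) / ε := by
      rw [integral_div, integral_sub (hlint π) (hBfst π), hBtrans π hπmarg]
    rw [← EReal.coe_mul, ← EReal.coe_sub]
    apply EReal.coe_le_coe_iff.2
    rw [hIeq, hgπ] at hgibbs
    have h9 : (∫ p, ℓ p ∂π - ∫ x, B x ∂μ1) / ε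
        ≤ ∫ p, Real.log (π.rnDeriv (μ1.prod μ2) p).toReal ∂π := by linarith
    have h10 := (div_le_iff₀ hε).1 h9
    linarith
  · rw [klDiv, if_neg hcase, EReal.coe_mul_top_of_pos hε, EReal.top_sub_coe]
    exact le_top
end

section
/- The function J : ℝ^A → ℝ defined by J(ζ) = ∫_X log( ∫_Y exp( ζᵀf(y) − ε^{-1} c(x,y) ) dμ2(y) ) dμ1(x) is convex and continuously differentiable on ℝ^A. -/
open MeasureTheory

section Aux

/-- Continuous functions on compact spaces are integrable w.r.t. finite measures. -/
lemma mcot_cont_integrable {Y : Type*} [MetricSpace Y] [CompactSpace Y] [MeasurableSpace Y]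
    [BorelSpace Y] (μ : Measure Y) [IsFiniteMeasure μ] {E : Type*} [NormedAddCommGroup E]
    (g : Y → E) (hg : Continuous g) : Integrable g μ :=
  hg.integrable_of_hasCompactSupport (isClosed_tsupport g).isCompact

/-- A parametric integral over a compact space with jointly continuous integrand
is continuous. -/
lemma mcot_cont_integral {Z Y : Type*} [TopologicalSpace Z] [FirstCountableTopology Z]
    [LocallyCompactSpace Z]
    [MetricSpace Y] [CompactSpace Y] [MeasurableSpace Y] [BorelSpace Y]
    (μ : Measure Y) [IsFiniteMeasure μ]
    {E : Type*} [NormedAddCommGroup E] [NormedSpace ℝ E] [CompleteSpace E]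
    (F : Z → Y → E) (hF : Continuous (Function.uncurry F)) :
    Continuous (fun z => ∫ y, F z y ∂μ) := by
  have := continuous_parametric_integral_of_continuous (μ := μ) hF isCompact_univ
  simpa [Measure.restrict_univ] using this

variable {Y : Type*} [MetricSpace Y] [CompactSpace Y] [MeasurableSpace Y] [BorelSpace Y]

/-- The linear functional `ζ ↦ ∑ a, ζ a * f y a`. -/
noncomputable def mcotEll (A : ℕ) (f : Y → Fin A → ℝ) (y : Y) : (Fin A → ℝ) →L[ℝ] ℝ :=
  ∑ a, f y a • ContinuousLinearMap.proj a

lemma mcotEll_apply (A : ℕ) (f : Y → Fin A → ℝ) (y : Y) (ζ : Fin A → ℝ) :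
    mcotEll A f y ζ = ∑ a, ζ a * f y a := by
  simp [mcotEll, ContinuousLinearMap.sum_apply, mul_comm]

lemma mcotEll_cont (A : ℕ) (f : Y → Fin A → ℝ) (hf : Continuous f) :
    Continuous (mcotEll A f) := by
  refine continuous_finset_sum _ fun a _ => ?_
  exact ((continuous_apply a).comp hf).smul continuous_const

lemma mcotEll_norm_le (A : ℕ) (f : Y → Fin A → ℝ) {Mf : ℝ} (hMf0 : 0 ≤ Mf)
    (hMf : ∀ y, ‖f y‖ ≤ Mf) (y : Y) : ‖mcotEll A f y‖ ≤ A * Mf := by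
  refine ContinuousLinearMap.opNorm_le_bound _ (by positivity) fun v => ?_
  rw [mcotEll_apply]
  calc ‖∑ a, v a * f y a‖ ≤ ∑ a, ‖v a * f y a‖ := norm_sum_le _ _
    _ ≤ ∑ _a : Fin A, Mf * ‖v‖ := by
        refine Finset.sum_le_sum fun a _ => ?_
        rw [norm_mul]
        have h1 : ‖v a‖ ≤ ‖v‖ := norm_le_pi_norm v a
        have h2 : ‖f y a‖ ≤ Mf := le_trans (norm_le_pi_norm (f y) a) (hMf y)
        calc ‖v a‖ * ‖f y a‖ ≤ ‖v‖ * Mf := by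
              exact mul_le_mul h1 h2 (norm_nonneg _) (norm_nonneg _)
          _ = Mf * ‖v‖ := mul_comm _ _
    _ = A * Mf * ‖v‖ := by simp [Finset.sum_const, mul_comm, mul_assoc, mul_left_comm]

end Aux

set_option maxHeartbeats 2000000 in
set_option synthInstance.maxHeartbeats 1000000 in
/-- The dual function
`J(ζ) = ∫ log(∫ exp(ζᵀf(y) − ε⁻¹ c(x,y)) dμ2(y)) dμ1(x)` is convex and
continuously differentiable on `ℝ^A`. -/
theorem mcot_dual_convex_C1
    {X Y : Type*} [MetricSpace X] [CompactSpace X] [MeasurableSpace X] [BorelSpace X]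
    [MetricSpace Y] [CompactSpace Y] [MeasurableSpace Y] [BorelSpace Y]
    (μ1 : Measure X) [IsProbabilityMeasure μ1] (μ2 : Measure Y) [IsProbabilityMeasure μ2]
    (ε : ℝ) (hε : 0 < ε)
    (c : X × Y → ℝ) (hc : Continuous c) (hc0 : ∀ p, 0 ≤ c p)
    (A : ℕ) (f : Y → Fin A → ℝ) (hf : Continuous f)
    (J : (Fin A → ℝ) → ℝ)
    (hJ : ∀ ζ, J ζ = ∫ x, Real.log
      (∫ y, Real.exp ((∑ a, ζ a * f y a) - ε⁻¹ * c (x, y)) ∂μ2) ∂μ1) :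
    ConvexOn ℝ Set.univ J ∧ ContDiff ℝ 1 J := by
  -- bounds on f and c
  obtain ⟨Mf₀, hMf₀⟩ : ∃ C, ∀ y ∈ Set.univ, ‖f y‖ ≤ C :=
    isCompact_univ.exists_bound_of_continuousOn hf.continuousOn
  set Mf : ℝ := max Mf₀ 0 with hMfdef
  have hMf0 : 0 ≤ Mf := le_max_right _ _
  have hMf : ∀ y, ‖f y‖ ≤ Mf := fun y => le_trans (hMf₀ y trivial) (le_max_left _ _)
  obtain ⟨Mc₀, hMc₀⟩ : ∃ C, ∀ p ∈ Set.univ, ‖c p‖ ≤ C :=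
    isCompact_univ.exists_bound_of_continuousOn hc.continuousOn
  set Mc : ℝ := max Mc₀ 0 with hMcdef
  have hMc0 : 0 ≤ Mc := le_max_right _ _
  have hMc : ∀ p, c p ≤ Mc :=
    fun p => le_trans (le_trans (le_abs_self _) (hMc₀ p trivial)) (le_max_left _ _)
  have hεinv : 0 ≤ ε⁻¹ := le_of_lt (inv_pos.mpr hε)
  -- the kernel
  obtain ⟨F, hFdef⟩ : ∃ F' : (Fin A → ℝ) → X → Y → ℝ,
      F' = fun ζ x y => Real.exp (mcotEll A f y ζ - ε⁻¹ * c (x, y)) := ⟨_, rfl⟩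
  have hJ' : ∀ ζ, J ζ = ∫ x, Real.log (∫ y, F ζ x y ∂μ2) ∂μ1 := by
    intro ζ
    rw [hJ ζ]
    simp only [hFdef, mcotEll_apply]
  -- joint continuity of the kernel
  have hFcont : Continuous (fun p : (Fin A → ℝ) × X × Y => F p.1 p.2.1 p.2.2) := by
    rw [hFdef]
    apply Real.continuous_exp.comp
    apply Continuous.sub
    · have h1 : Continuous (fun p : (Fin A → ℝ) × X × Y => mcotEll A f p.2.2) :=
        (mcotEll_cont A f hf).comp (continuous_snd.comp continuous_snd)
      exact h1.clm_apply continuous_fst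
    · exact continuous_const.mul (hc.comp (continuous_snd))
  -- pointwise bounds on the kernel
  have hFpos : ∀ ζ x y, 0 < F ζ x y := by
    simp only [hFdef]; exact fun ζ x y => Real.exp_pos _
  have hFle : ∀ (R : ℝ) (ζ : Fin A → ℝ), ‖ζ‖ ≤ R → ∀ x y,
      F ζ x y ≤ Real.exp (A * Mf * R) := by
    intro R ζ hζ x y
    rw [hFdef]
    apply Real.exp_le_exp.mpr
    have h1 : mcotEll A f y ζ ≤ A * Mf * R := by
      calc mcotEll A f y ζ ≤ ‖mcotEll A f y ζ‖ := le_abs_self _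
        _ ≤ ‖mcotEll A f y‖ * ‖ζ‖ := ContinuousLinearMap.le_opNorm _ _
        _ ≤ (A * Mf) * R := by
            apply mul_le_mul (mcotEll_norm_le A f hMf0 hMf y) hζ (norm_nonneg _)
            positivity
    have h2 : 0 ≤ ε⁻¹ * c (x, y) := mul_nonneg hεinv (hc0 _)
    linarith
  have hFge : ∀ (R : ℝ) (ζ : Fin A → ℝ), ‖ζ‖ ≤ R → ∀ x y,
      Real.exp (-(A * Mf * R) - ε⁻¹ * Mc) ≤ F ζ x y := by
    intro R ζ hζ x y
    rw [hFdef]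
    apply Real.exp_le_exp.mpr
    have h1 : -(A * Mf * R) ≤ mcotEll A f y ζ := by
      have := abs_le.mp (le_trans (le_abs_self ‖mcotEll A f y ζ‖)
        (le_trans (abs_of_nonneg (norm_nonneg _)).le
          ((ContinuousLinearMap.le_opNorm _ _).trans
            (mul_le_mul (mcotEll_norm_le A f hMf0 hMf y) hζ (norm_nonneg _) (by positivity)))))
      have h := neg_abs_le (mcotEll A f y ζ)
      have habs : |mcotEll A f y ζ| ≤ A * Mf * R := by
        rw [← Real.norm_eq_abs]
        calc ‖mcotEll A f y ζ‖ ≤ ‖mcotEll A f y‖ * ‖ζ‖ := ContinuousLinearMap.le_opNorm _ _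
          _ ≤ (A * Mf) * R := mul_le_mul (mcotEll_norm_le A f hMf0 hMf y) hζ
              (norm_nonneg _) (by positivity)
      linarith [neg_abs_le (mcotEll A f y ζ)]
    have h2 : ε⁻¹ * c (x, y) ≤ ε⁻¹ * Mc := mul_le_mul_of_nonneg_left (hMc _) hεinv
    linarith
  -- the partition function Z and its properties
  obtain ⟨Z, hZdef⟩ : ∃ Z' : (Fin A → ℝ) → X → ℝ,
      Z' = fun ζ x => ∫ y, F ζ x y ∂μ2 := ⟨_, rfl⟩
  have hFcy : ∀ ζ x, Continuous (fun y => F ζ x y) := by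
    intro ζ x
    exact hFcont.comp
      (show Continuous fun y : Y => ((ζ, x, y) : (Fin A → ℝ) × X × Y) by fun_prop)
  have hFcxy : ∀ ζ, Continuous (fun p : X × Y => F ζ p.1 p.2) := by
    intro ζ
    exact hFcont.comp
      (show Continuous fun p : X × Y => ((ζ, p.1, p.2) : (Fin A → ℝ) × X × Y) by fun_prop)
  have hFint : ∀ ζ x, Integrable (fun y => F ζ x y) μ2 := fun ζ x =>
    mcot_cont_integrable μ2 _ (hFcy ζ x)
  have hZcont : Continuous (fun p : (Fin A → ℝ) × X => Z p.1 p.2) := by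
    rw [hZdef]
    apply mcot_cont_integral μ2 (fun p : (Fin A → ℝ) × X => fun y => F p.1 p.2 y)
    exact hFcont.comp
      (show Continuous fun q : ((Fin A → ℝ) × X) × Y => ((q.1.1, q.1.2, q.2) :
        (Fin A → ℝ) × X × Y) by fun_prop)
  have hZge : ∀ (R : ℝ) (ζ : Fin A → ℝ), ‖ζ‖ ≤ R → ∀ x,
      Real.exp (-(A * Mf * R) - ε⁻¹ * Mc) ≤ Z ζ x := by
    intro R ζ hζ x
    rw [hZdef]
    have : ∫ (_ : Y), Real.exp (-(A * Mf * R) - ε⁻¹ * Mc) ∂μ2 =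
        Real.exp (-(A * Mf * R) - ε⁻¹ * Mc) := by simp
    rw [← this]
    exact integral_mono (integrable_const _) (hFint ζ x) (fun y => hFge R ζ hζ x y)
  have hZpos : ∀ ζ x, 0 < Z ζ x := by
    intro ζ x
    exact lt_of_lt_of_le (Real.exp_pos _) (hZge ‖ζ‖ ζ le_rfl x)
  have hZle : ∀ (R : ℝ) (ζ : Fin A → ℝ), ‖ζ‖ ≤ R → ∀ x,
      Z ζ x ≤ Real.exp (A * Mf * R) := by
    intro R ζ hζ x
    rw [hZdef]
    have : ∫ (_ : Y), Real.exp (A * Mf * R) ∂μ2 = Real.exp (A * Mf * R) := by simp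
    rw [← this]
    exact integral_mono (hFint ζ x) (integrable_const _) (fun y => hFle R ζ hζ x y)
  -- common continuity/integrability facts
  have hZcx : ∀ ζ, Continuous fun x => Z ζ x := fun ζ =>
    hZcont.comp (continuous_const.prodMk continuous_id)
  have hlogZc : ∀ ζ, Continuous fun x => Real.log (Z ζ x) := fun ζ =>
    (hZcx ζ).log (fun x => ne_of_gt (hZpos ζ x))
  have hlogint : ∀ ζ, Integrable (fun x => Real.log (Z ζ x)) μ1 := fun ζ =>
    mcot_cont_integrable μ1 _ (hlogZc ζ)
  have hJZ : ∀ ζ, J ζ = ∫ x, Real.log (Z ζ x) ∂μ1 := by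
    intro ζ; rw [hJ' ζ, hZdef]
  constructor
  · -- convexity
    refine ⟨convex_univ, ?_⟩
    rintro ζ1 - ζ2 - t s ht hs hts
    rcases eq_or_lt_of_le ht with ht0 | ht0
    · have hs1 : s = 1 := by linarith
      simp [← ht0, hs1]
    rcases eq_or_lt_of_le hs with hs0 | hs0
    · have ht1 : t = 1 := by linarith
      simp [← hs0, ht1]
    have ht1 : t < 1 := by linarith
    have hs1 : s < 1 := by linarith
    have key : ∀ x, Real.log (Z (t • ζ1 + s • ζ2) x) ≤
        t * Real.log (Z ζ1 x) + s * Real.log (Z ζ2 x) := by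
      intro x
      have hmul : Z (t • ζ1 + s • ζ2) x ≤ (Z ζ1 x) ^ t * (Z ζ2 x) ^ s := by
        have hpt : ∀ y, F (t • ζ1 + s • ζ2) x y
            = (F ζ1 x y) ^ t * (F ζ2 x y) ^ s := by
          intro y
          rw [hFdef]
          simp only
          rw [← Real.exp_mul, ← Real.exp_mul, ← Real.exp_add]
          congr 1
          rw [ContinuousLinearMap.map_add, ContinuousLinearMap.map_smul,
            ContinuousLinearMap.map_smul]
          simp only [smul_eq_mul]
          linear_combination (ε⁻¹ * c (x, y)) * hts
        have hpq : Real.HolderConjugate (1/t) (1/s) := by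
          refine Real.holderConjugate_iff.mpr ⟨one_lt_one_div ht0 ht1, ?_⟩
          rw [one_div, one_div, inv_inv, inv_inv]
          exact hts
        have hmem : ∀ (ζ : Fin A → ℝ) (r : ℝ), 0 ≤ r →
            MemLp (fun y => (F ζ x y) ^ r) (ENNReal.ofReal (1/r)) μ2 := by
          intro ζ r hr
          refine MemLp.mono_exponent
            (memLp_top_of_bound ?_ (Real.exp (↑A * Mf * ‖ζ‖) ^ r) ?_) le_top
          · exact ((hFcy ζ x).rpow_const (fun y => Or.inr hr)).aestronglyMeasurable
          · refine Filter.Eventually.of_forall fun y => ?_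
            rw [Real.norm_eq_abs, abs_of_nonneg (Real.rpow_nonneg (hFpos ζ x y).le r)]
            exact Real.rpow_le_rpow (hFpos ζ x y).le (hFle ‖ζ‖ ζ le_rfl x y) hr
        have hrp : ∀ (ζ : Fin A → ℝ) (r : ℝ), r ≠ 0 → ∀ y,
            ((F ζ x y) ^ r) ^ (1/r) = F ζ x y := by
          intro ζ r hr y
          rw [← Real.rpow_mul (hFpos ζ x y).le, mul_one_div_cancel hr, Real.rpow_one]
        have hH := integral_mul_le_Lp_mul_Lq_of_nonneg (μ := μ2) hpq
          (f := fun y => (F ζ1 x y) ^ t) (g := fun y => (F ζ2 x y) ^ s)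
          (Filter.Eventually.of_forall fun y => Real.rpow_nonneg (hFpos ζ1 x y).le t)
          (Filter.Eventually.of_forall fun y => Real.rpow_nonneg (hFpos ζ2 x y).le s)
          (hmem ζ1 t ht0.le) (hmem ζ2 s hs0.le)
        simp only [hZdef]
        calc ∫ y, F (t • ζ1 + s • ζ2) x y ∂μ2
            = ∫ y, (F ζ1 x y) ^ t * (F ζ2 x y) ^ s ∂μ2 := by
              exact integral_congr_ae (Filter.Eventually.of_forall fun y => hpt y)
          _ ≤ (∫ y, ((F ζ1 x y) ^ t) ^ (1/t) ∂μ2) ^ (1 / (1/t)) *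
              (∫ y, ((F ζ2 x y) ^ s) ^ (1/s) ∂μ2) ^ (1 / (1/s)) := hH
          _ = (∫ y, F ζ1 x y ∂μ2) ^ t * (∫ y, F ζ2 x y ∂μ2) ^ s := by
              rw [one_div_one_div, one_div_one_div]
              congr 1
              · congr 1
                exact integral_congr_ae
                  (Filter.Eventually.of_forall fun y => hrp ζ1 t ht0.ne' y)
              · congr 1
                exact integral_congr_ae
                  (Filter.Eventually.of_forall fun y => hrp ζ2 s hs0.ne' y)
      calc Real.log (Z (t • ζ1 + s • ζ2) x)
          ≤ Real.log ((Z ζ1 x) ^ t * (Z ζ2 x) ^ s) :=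
            Real.log_le_log (hZpos _ x) hmul
        _ = t * Real.log (Z ζ1 x) + s * Real.log (Z ζ2 x) := by
            rw [Real.log_mul (Real.rpow_pos_of_pos (hZpos ζ1 x) t).ne'
              (Real.rpow_pos_of_pos (hZpos ζ2 x) s).ne',
              Real.log_rpow (hZpos ζ1 x), Real.log_rpow (hZpos ζ2 x)]
    rw [hJZ, hJZ, hJZ]
    simp only [smul_eq_mul]
    calc ∫ x, Real.log (Z (t • ζ1 + s • ζ2) x) ∂μ1
        ≤ ∫ x, (t * Real.log (Z ζ1 x) + s * Real.log (Z ζ2 x)) ∂μ1 :=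
          integral_mono (hlogint _)
            (((hlogint ζ1).const_mul t).add ((hlogint ζ2).const_mul s)) key
      _ = t * ∫ x, Real.log (Z ζ1 x) ∂μ1 + s * ∫ x, Real.log (Z ζ2 x) ∂μ1 := by
          rw [integral_add ((hlogint ζ1).const_mul t) ((hlogint ζ2).const_mul s),
            integral_const_mul, integral_const_mul]
  · -- C¹
    obtain ⟨ZD, hZDdef⟩ : ∃ ZD' : (Fin A → ℝ) → X → (Fin A → ℝ) →L[ℝ] ℝ,
        ZD' = fun ζ x => ∫ y, F ζ x y • mcotEll A f y ∂μ2 := ⟨_, rfl⟩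
    have hintc : ∀ ζ x, Continuous fun y => F ζ x y • mcotEll A f y := fun ζ x =>
      (hFcy ζ x).smul (mcotEll_cont A f hf)
    have hZDcont : Continuous fun p : (Fin A → ℝ) × X => ZD p.1 p.2 := by
      rw [hZDdef]
      apply mcot_cont_integral μ2
        (fun p : (Fin A → ℝ) × X => fun y => F p.1 p.2 y • mcotEll A f y)
      show Continuous fun q : ((Fin A → ℝ) × X) × Y => F q.1.1 q.1.2 q.2 • mcotEll A f q.2
      refine Continuous.smul (f := fun q : ((Fin A → ℝ) × X) × Y => F q.1.1 q.1.2 q.2)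
        (g := fun q : ((Fin A → ℝ) × X) × Y => mcotEll A f q.2) ?_ ?_
      · exact hFcont.comp (show Continuous fun q : ((Fin A → ℝ) × X) × Y =>
          ((q.1.1, q.1.2, q.2) : (Fin A → ℝ) × X × Y) by fun_prop)
      · exact (mcotEll_cont A f hf).comp continuous_snd
    have hZDnorm : ∀ (R : ℝ) (ζ : Fin A → ℝ), ‖ζ‖ ≤ R → ∀ x,
        ‖ZD ζ x‖ ≤ (A * Mf) * Real.exp (A * Mf * R) := by
      intro R ζ hζ x
      rw [hZDdef]
      refine le_trans (norm_integral_le_of_norm_le_const (μ := μ2)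
        (C := (A * Mf) * Real.exp (A * Mf * R)) ?_) (by simp)
      refine Filter.Eventually.of_forall fun y => ?_
      refine le_trans (norm_smul_le (F ζ x y) (mcotEll A f y)) ?_
      rw [Real.norm_eq_abs, abs_of_pos (hFpos ζ x y)]
      calc F ζ x y * ‖mcotEll A f y‖
          ≤ Real.exp (A*Mf*R) * (A*Mf) :=
            mul_le_mul (hFle R ζ hζ x y) (mcotEll_norm_le A f hMf0 hMf y)
              (norm_nonneg _) (Real.exp_pos _).le
        _ = (A*Mf) * Real.exp (A*Mf*R) := mul_comm _ _
    have hZD_deriv : ∀ (ζ₀ : Fin A → ℝ) (x : X),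
        HasFDerivAt (fun ζ => Z ζ x) (ZD ζ₀ x) ζ₀ := by
      intro ζ₀ x
      simp only [hZdef, hZDdef]
      refine hasFDerivAt_integral_of_dominated_of_fderiv_le
        (F' := fun ζ y => F ζ x y • mcotEll A f y)
        (bound := fun _ => (A*Mf) * Real.exp (A * Mf * (‖ζ₀‖ + 1)))
        (Metric.ball_mem_nhds ζ₀ one_pos) ?_ ?_ ?_ ?_ ?_ ?_
      · exact Filter.Eventually.of_forall fun ζ => (hFcy ζ x).aestronglyMeasurable
      · exact hFint ζ₀ x
      · exact (hintc ζ₀ x).aestronglyMeasurable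
      · refine Filter.Eventually.of_forall fun y ζ hζ => ?_
        have hζR : ‖ζ‖ ≤ ‖ζ₀‖ + 1 := by
          have hd := mem_ball_iff_norm.mp hζ
          calc ‖ζ‖ = ‖ζ₀ + (ζ - ζ₀)‖ := by ring_nf
            _ ≤ ‖ζ₀‖ + ‖ζ - ζ₀‖ := norm_add_le _ _
            _ ≤ ‖ζ₀‖ + 1 := by linarith
        refine le_trans (norm_smul_le (F ζ x y) (mcotEll A f y)) ?_
        rw [Real.norm_eq_abs, abs_of_pos (hFpos ζ x y)]
        calc F ζ x y * ‖mcotEll A f y‖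
            ≤ Real.exp (A*Mf*(‖ζ₀‖+1)) * (A*Mf) :=
              mul_le_mul (hFle _ ζ hζR x y) (mcotEll_norm_le A f hMf0 hMf y)
                (norm_nonneg _) (Real.exp_pos _).le
          _ = (A*Mf) * Real.exp (A*Mf*(‖ζ₀‖+1)) := mul_comm _ _
      · exact integrable_const _
      · refine Filter.Eventually.of_forall fun y ζ hζ => ?_
        simp only [hFdef]
        exact ((mcotEll A f y).hasFDerivAt.sub_const (ε⁻¹ * c (x, y))).exp
    obtain ⟨D, hDdef⟩ : ∃ D' : (Fin A → ℝ) → (Fin A → ℝ) →L[ℝ] ℝ,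
        D' = fun ζ => ∫ x, (Z ζ x)⁻¹ • ZD ζ x ∂μ1 := ⟨_, rfl⟩
    have hGDcont : Continuous fun p : (Fin A → ℝ) × X => (Z p.1 p.2)⁻¹ • ZD p.1 p.2 :=
      (hZcont.inv₀ (fun p => (hZpos p.1 p.2).ne')).smul hZDcont
    have hGDcx : ∀ ζ, Continuous fun x => (Z ζ x)⁻¹ • ZD ζ x := fun ζ =>
      hGDcont.comp (continuous_const.prodMk continuous_id)
    have hJderiv : ∀ ζ₀, HasFDerivAt J (D ζ₀) ζ₀ := by
      intro ζ₀
      have hJfun : J = fun ζ => ∫ x, Real.log (Z ζ x) ∂μ1 := funext hJZ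
      rw [hJfun]
      simp only [hDdef]
      refine hasFDerivAt_integral_of_dominated_of_fderiv_le
        (F' := fun ζ x => (Z ζ x)⁻¹ • ZD ζ x)
        (bound := fun _ => (Real.exp (-(A*Mf*(‖ζ₀‖+1)) - ε⁻¹*Mc))⁻¹ *
          ((A*Mf) * Real.exp (A*Mf*(‖ζ₀‖+1)))) (Metric.ball_mem_nhds ζ₀ one_pos) ?_ ?_ ?_ ?_ ?_ ?_
      · exact Filter.Eventually.of_forall fun ζ => (hlogZc ζ).aestronglyMeasurable
      · exact hlogint ζ₀
      · exact (hGDcx ζ₀).aestronglyMeasurable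
      · refine Filter.Eventually.of_forall fun x ζ hζ => ?_
        have hζR : ‖ζ‖ ≤ ‖ζ₀‖ + 1 := by
          have hd := mem_ball_iff_norm.mp hζ
          calc ‖ζ‖ = ‖ζ₀ + (ζ - ζ₀)‖ := by ring_nf
            _ ≤ ‖ζ₀‖ + ‖ζ - ζ₀‖ := norm_add_le _ _
            _ ≤ ‖ζ₀‖ + 1 := by linarith
        refine le_trans (norm_smul_le ((Z ζ x)⁻¹) (ZD ζ x)) ?_
        rw [Real.norm_eq_abs, abs_of_pos (inv_pos.mpr (hZpos ζ x))]
        refine mul_le_mul ?_ (hZDnorm _ ζ hζR x) (norm_nonneg _)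
          (inv_pos.mpr (Real.exp_pos _)).le
        exact inv_anti₀ (Real.exp_pos _) (hZge _ ζ hζR x)
      · exact integrable_const _
      · exact Filter.Eventually.of_forall fun x ζ hζ =>
          (hZD_deriv ζ x).log (hZpos ζ x).ne'
    have hDcont : Continuous D := by
      rw [hDdef]
      exact mcot_cont_integral μ1 (fun ζ x => (Z ζ x)⁻¹ • ZD ζ x) hGDcont
    rw [contDiff_one_iff_fderiv]
    refine ⟨fun ζ => (hJderiv ζ).differentiableAt, ?_⟩
    have hfd : (fderiv ℝ J) = D := funext fun ζ => (hJderiv ζ).fderiv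
    rw [hfd]
    exact hDcont
end

section
/- Let J : ℝ^A → ℝ be defined by J(ζ) = ∫_X log( ∫_Y exp( ζᵀf(y) − ε^{-1} c(x,y) ) dμ2(y) ) dμ1(x), and for each ζ ∈ ℝ^A and x ∈ X let K_ζ(x,·) be the probability measure on Y with density dK_ζ(x,·)/dμ2(y) = exp( ζᵀf(y) − ε^{-1} c(x,y) ) / ∫_Y exp( ζᵀf(y') − ε^{-1} c(x,y') ) dμ2(y'). Then for every ζ ∈ ℝ^A and every a ∈ {1,…,A}, the partial derivative of J satisfies ∂J/∂ζ_a (ζ) = ∫_X ( ∫_Y f_a(y) dK_ζ(x,·)(y) ) dμ1(x); that is, the gradient of J at ζ equals the expectation of f(Y) under the joint law dπ^ζ(x,y) = dK_ζ(x,·)(y) dμ1(x). -/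
set_option maxHeartbeats 1000000
set_option synthInstance.maxHeartbeats 400000

open MeasureTheory
open scoped NNReal ENNReal

private lemma cont_integrable {α E : Type*} [MeasurableSpace α] [TopologicalSpace α]
    [CompactSpace α] [SecondCountableTopology α] [OpensMeasurableSpace α] [NormedAddCommGroup E]
    {μ : Measure α} [IsFiniteMeasure μ] {g : α → E} (hg : Continuous g) :
    Integrable g μ := by
  obtain ⟨B, hB⟩ := isCompact_univ.exists_bound_of_continuousOn hg.continuousOn
  exact (integrable_const B).mono' hg.aestronglyMeasurable
    (Filter.Eventually.of_forall fun x => hB x trivial)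

private lemma norm_smul_clm {A : ℕ} (r : ℝ) (L : (Fin A → ℝ) →L[ℝ] ℝ) :
    ‖r • L‖ = |r| * ‖L‖ := by
  rw [show ‖r • L‖ = ‖r‖ * ‖L‖ from norm_smul r L, Real.norm_eq_abs]

private noncomputable def linL {A : ℕ} (v : Fin A → ℝ) : (Fin A → ℝ) →L[ℝ] ℝ :=
  ∑ a, v a • ContinuousLinearMap.proj a

private lemma linL_apply {A : ℕ} (v ξ : Fin A → ℝ) : linL v ξ = ∑ a, v a * ξ a := by
  simp [linL, smul_eq_mul]

private lemma linL_norm_le {A : ℕ} (v : Fin A → ℝ) {M : ℝ} (hM : 0 ≤ M)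
    (h : ∀ a, |v a| ≤ M) : ‖linL v‖ ≤ A * M := by
  refine ContinuousLinearMap.opNorm_le_bound _ (by positivity) fun ξ => ?_
  rw [linL_apply]
  calc ‖∑ a, v a * ξ a‖ ≤ ∑ a, |v a * ξ a| := by
        simpa [Real.norm_eq_abs] using Finset.abs_sum_le_sum_abs (fun a => v a * ξ a) Finset.univ
    _ ≤ ∑ _a : Fin A, M * ‖ξ‖ := by
        refine Finset.sum_le_sum fun a _ => ?_
        rw [abs_mul]
        exact mul_le_mul (h a) (by simpa [Real.norm_eq_abs] using norm_le_pi_norm ξ a)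
          (abs_nonneg _) hM
    _ = A * M * ‖ξ‖ := by simp [Finset.sum_const, Finset.card_univ]; ring

private lemma linL_cont {A : ℕ} {Y : Type*} [TopologicalSpace Y] {f : Y → Fin A → ℝ}
    (hf : Continuous f) : Continuous fun y => linL (f y) := by
  unfold linL
  exact continuous_finset_sum _ fun a _ =>
    (((continuous_apply a).comp hf).smul continuous_const)

private lemma linL_hasFDerivAt {A : ℕ} (v w : Fin A → ℝ) :
    HasFDerivAt (fun w : Fin A → ℝ => ∑ a, w a * v a) (linL v) w := by
  have h : (fun w : Fin A → ℝ => ∑ a, w a * v a) = ⇑(linL v) := by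
    funext w'
    rw [linL_apply]
    exact Finset.sum_congr rfl fun a _ => mul_comm _ _
  rw [h]
  exact (linL v).hasFDerivAt

private lemma linL_single {A : ℕ} (v : Fin A → ℝ) (a : Fin A) :
    linL v (Pi.single a 1) = v a := by
  rw [linL_apply]
  simp [Pi.single_apply]

/-- The gradient of the dual function
`J(ζ) = ∫ log(∫ exp(ζᵀf(y) − ε⁻¹ c(x,y)) dμ2(y)) dμ1(x)`: for every `ζ` and
coordinate `a`, `∂J/∂ζ_a(ζ) = ∫ (∫ f_a(y) dK_ζ(x,·)(y)) dμ1(x)`, where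
`K_ζ(x,·)` is the tilted probability measure with density proportional to
`exp(ζᵀf(y) − ε⁻¹ c(x,y))` with respect to `μ2`. -/
theorem mcot_dual_gradient
    {X Y : Type*} [MetricSpace X] [CompactSpace X] [MeasurableSpace X] [BorelSpace X]
    [MetricSpace Y] [CompactSpace Y] [MeasurableSpace Y] [BorelSpace Y]
    (μ1 : Measure X) [IsProbabilityMeasure μ1] (μ2 : Measure Y) [IsProbabilityMeasure μ2]
    (ε : ℝ) (hε : 0 < ε)
    (c : X × Y → ℝ) (hc : Continuous c) (hc0 : ∀ p, 0 ≤ c p)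
    (A : ℕ) (f : Y → Fin A → ℝ) (hf : Continuous f)
    (J : (Fin A → ℝ) → ℝ)
    (hJ : ∀ ζ, J ζ = ∫ x, Real.log
      (∫ y, Real.exp ((∑ a, ζ a * f y a) - ε⁻¹ * c (x, y)) ∂μ2) ∂μ1)
    (K : (Fin A → ℝ) → X → Measure Y)
    (hK : ∀ ζ x, K ζ x = μ2.withDensity (fun y => ENNReal.ofReal
      (Real.exp ((∑ b, ζ b * f y b) - ε⁻¹ * c (x, y)) /
        ∫ y', Real.exp ((∑ b, ζ b * f y' b) - ε⁻¹ * c (x, y')) ∂μ2))) :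
    ∀ ζ : Fin A → ℝ, DifferentiableAt ℝ J ζ ∧
      ∀ a : Fin A, fderiv ℝ J ζ (Pi.single a 1)
        = ∫ x, (∫ y, f y a ∂(K ζ x)) ∂μ1 := by
  -- bounds on f and c
  obtain ⟨M₀, hM₀⟩ := isCompact_univ.exists_bound_of_continuousOn hf.continuousOn
  set M : ℝ := max M₀ 0 with hMdef
  have hM0 : (0:ℝ) ≤ M := le_max_right _ _
  have hM : ∀ y a, |f y a| ≤ M := fun y a => by
    calc |f y a| = ‖f y a‖ := (Real.norm_eq_abs _).symm
      _ ≤ ‖f y‖ := norm_le_pi_norm (f y) a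
      _ ≤ M₀ := hM₀ y trivial
      _ ≤ M := le_max_left _ _
  obtain ⟨C₀, hC₀⟩ := isCompact_univ.exists_bound_of_continuousOn hc.continuousOn
  set C : ℝ := max C₀ 0 with hCdef
  have hC0 : (0:ℝ) ≤ C := le_max_right _ _
  have hCb : ∀ p, c p ≤ C := fun p =>
    (le_abs_self _).trans (((Real.norm_eq_abs _) ▸ hC₀ p trivial).trans (le_max_left _ _))
  have hεinv : (0:ℝ) ≤ ε⁻¹ := by positivity
  -- the basic estimate on the exponent
  have hsum : ∀ (w : Fin A → ℝ) (y : Y), |∑ a, w a * f y a| ≤ A * M * ‖w‖ := by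
    intro w y
    calc |∑ a, w a * f y a| ≤ ∑ a, |w a * f y a| :=
          Finset.abs_sum_le_sum_abs (fun a => w a * f y a) Finset.univ
      _ ≤ ∑ _a : Fin A, ‖w‖ * M := by
          refine Finset.sum_le_sum fun a _ => ?_
          rw [abs_mul]
          exact mul_le_mul (by simpa [Real.norm_eq_abs] using norm_le_pi_norm w a) (hM y a)
            (abs_nonneg _) (norm_nonneg _)
      _ = A * M * ‖w‖ := by simp [Finset.sum_const, Finset.card_univ]; ring
  -- continuity of the integrand
  have hgcy : ∀ (w : Fin A → ℝ) (x : X),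
      Continuous fun y => Real.exp ((∑ a, w a * f y a) - ε⁻¹ * c (x, y)) := by
    intro w x
    apply Real.continuous_exp.comp
    apply Continuous.sub
    · exact continuous_finset_sum _ fun a _ =>
        continuous_const.mul ((continuous_apply a).comp hf)
    · exact continuous_const.mul (hc.comp (continuous_const.prodMk continuous_id))
  have hgcx : ∀ (w : Fin A → ℝ) (y : Y),
      Continuous fun x => Real.exp ((∑ a, w a * f y a) - ε⁻¹ * c (x, y)) := by
    intro w y
    apply Real.continuous_exp.comp
    apply Continuous.sub
    · exact continuous_const
    · exact continuous_const.mul (hc.comp (continuous_id.prodMk continuous_const))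
  -- pointwise bounds on the integrand
  have hgub : ∀ (w : Fin A → ℝ) (x : X) (y : Y),
      Real.exp ((∑ a, w a * f y a) - ε⁻¹ * c (x, y)) ≤ Real.exp (A * M * ‖w‖) := by
    intro w x y
    apply Real.exp_le_exp.mpr
    have h1 := hsum w y
    have h2 : 0 ≤ ε⁻¹ * c (x, y) := mul_nonneg hεinv (hc0 _)
    have h3 := le_abs_self (∑ a, w a * f y a)
    linarith
  have hglb : ∀ (w : Fin A → ℝ) (x : X) (y : Y),
      Real.exp (-(A * M * ‖w‖) - ε⁻¹ * C) ≤
        Real.exp ((∑ a, w a * f y a) - ε⁻¹ * c (x, y)) := by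
    intro w x y
    apply Real.exp_le_exp.mpr
    have h1 := hsum w y
    have h2 : ε⁻¹ * c (x, y) ≤ ε⁻¹ * C := mul_le_mul_of_nonneg_left (hCb _) hεinv
    have h3 := neg_abs_le (∑ a, w a * f y a)
    linarith
  -- integrability in y
  have hgint : ∀ (w : Fin A → ℝ) (x : X),
      Integrable (fun y => Real.exp ((∑ a, w a * f y a) - ε⁻¹ * c (x, y))) μ2 :=
    fun w x => cont_integrable (hgcy w x)
  -- lower bound for the partition function
  have hFilb : ∀ (w : Fin A → ℝ) (x : X),
      Real.exp (-(A * M * ‖w‖) - ε⁻¹ * C) ≤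
        ∫ y, Real.exp ((∑ a, w a * f y a) - ε⁻¹ * c (x, y)) ∂μ2 := by
    intro w x
    have h := integral_mono (integrable_const _) (hgint w x) (fun y => hglb w x y)
    simpa using h
  have hFipos : ∀ (w : Fin A → ℝ) (x : X),
      0 < ∫ y, Real.exp ((∑ a, w a * f y a) - ε⁻¹ * c (x, y)) ∂μ2 :=
    fun w x => lt_of_lt_of_le (Real.exp_pos _) (hFilb w x)
  -- norm bound for linL (f y)
  have hLf : ∀ y, ‖linL (f y)‖ ≤ A * M := fun y => linL_norm_le (f y) hM0 (fun a => hM y a)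
  have hAM : (0:ℝ) ≤ A * M := by positivity
  -- integrability of the CLM-valued integrand
  have hDint : ∀ (w : Fin A → ℝ) (x : X),
      Integrable (fun y => Real.exp ((∑ a, w a * f y a) - ε⁻¹ * c (x, y)) • linL (f y)) μ2 :=
    fun w x => cont_integrable ((hgcy w x).smul (linL_cont hf))
  -- derivative of the inner integral
  have hFideriv : ∀ (w : Fin A → ℝ) (x : X),
      HasFDerivAt (fun w' => ∫ y, Real.exp ((∑ a, w' a * f y a) - ε⁻¹ * c (x, y)) ∂μ2)
        (∫ y, Real.exp ((∑ a, w a * f y a) - ε⁻¹ * c (x, y)) • linL (f y) ∂μ2) w := by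
    intro w x
    apply hasFDerivAt_integral_of_dominated_of_fderiv_le (𝕜 := ℝ)
      (F := fun w' y => Real.exp ((∑ a, w' a * f y a) - ε⁻¹ * c (x, y)))
      (F' := fun w' y => Real.exp ((∑ a, w' a * f y a) - ε⁻¹ * c (x, y)) • linL (f y))
      (bound := fun _ => Real.exp (A * M * (‖w‖ + 1)) * (A * M)) (Metric.ball_mem_nhds _ one_pos)
    · exact Filter.Eventually.of_forall fun w' => (hgint w' x).aestronglyMeasurable
    · exact hgint w x
    · exact (hDint w x).aestronglyMeasurable
    · refine Filter.Eventually.of_forall fun y => fun w' hw' => ?_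
      have hw'n : ‖w'‖ ≤ ‖w‖ + 1 := by
        have h1 : ‖w' - w‖ < 1 := by simpa [dist_eq_norm] using hw'
        have h2 := norm_sub_norm_le w' w
        linarith
      rw [norm_smul_clm, abs_of_pos (Real.exp_pos _)]
      refine mul_le_mul ?_ (hLf y) (norm_nonneg _) (Real.exp_pos _).le
      refine (hgub w' x y).trans (Real.exp_le_exp.mpr ?_)
      exact mul_le_mul_of_nonneg_left hw'n hAM
    · exact integrable_const _
    · refine Filter.Eventually.of_forall fun y => fun w' _ => ?_
      exact ((linL_hasFDerivAt (f y) w').sub_const (ε⁻¹ * c (x, y))).exp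
  -- continuity in x of the inner integral
  have hFicont : ∀ w : Fin A → ℝ,
      Continuous fun x => ∫ y, Real.exp ((∑ a, w a * f y a) - ε⁻¹ * c (x, y)) ∂μ2 := by
    intro w
    refine continuous_of_dominated (bound := fun _ => Real.exp (A * M * ‖w‖))
      (fun x => (hgcy w x).aestronglyMeasurable) ?_ (integrable_const _) ?_
    · intro x
      refine Filter.Eventually.of_forall fun y => ?_
      rw [Real.norm_eq_abs, abs_of_pos (Real.exp_pos _)]
      exact hgub w x y
    · exact Filter.Eventually.of_forall fun y => hgcx w y
  have hDcont : ∀ w : Fin A → ℝ,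
      Continuous fun x =>
        ∫ y, Real.exp ((∑ a, w a * f y a) - ε⁻¹ * c (x, y)) • linL (f y) ∂μ2 := by
    intro w
    refine continuous_of_dominated (bound := fun _ => Real.exp (A * M * ‖w‖) * (A * M))
      (fun x => ((hgcy w x).smul (linL_cont hf)).aestronglyMeasurable) ?_
      (integrable_const _) ?_
    · intro x
      refine Filter.Eventually.of_forall fun y => ?_
      rw [norm_smul_clm, abs_of_pos (Real.exp_pos _)]
      exact mul_le_mul (hgub w x y) (hLf y) (norm_nonneg _) (Real.exp_pos _).le
    · refine Filter.Eventually.of_forall fun y => ?_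
      exact (hgcx w y).smul continuous_const
  -- norm bound on the CLM-valued integral
  have hDnorm : ∀ (w : Fin A → ℝ) (x : X),
      ‖∫ y, Real.exp ((∑ a, w a * f y a) - ε⁻¹ * c (x, y)) • linL (f y) ∂μ2‖ ≤
        Real.exp (A * M * ‖w‖) * (A * M) := by
    intro w x
    have h := norm_integral_le_of_norm_le_const (μ := μ2)
      (f := fun y => Real.exp ((∑ a, w a * f y a) - ε⁻¹ * c (x, y)) • linL (f y))
      (C := Real.exp (A * M * ‖w‖) * (A * M)) ?_
    · simpa using h
    · refine Filter.Eventually.of_forall fun y => ?_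
      rw [norm_smul_clm, abs_of_pos (Real.exp_pos _)]
      exact mul_le_mul (hgub w x y) (hLf y) (norm_nonneg _) (Real.exp_pos _).le
  intro ζ
  -- outer differentiation under the integral sign
  have houter : HasFDerivAt
      (fun w => ∫ x, Real.log (∫ y, Real.exp ((∑ a, w a * f y a) - ε⁻¹ * c (x, y)) ∂μ2) ∂μ1)
      (∫ x, (∫ y, Real.exp ((∑ a, ζ a * f y a) - ε⁻¹ * c (x, y)) ∂μ2)⁻¹ •
        ∫ y, Real.exp ((∑ a, ζ a * f y a) - ε⁻¹ * c (x, y)) • linL (f y) ∂μ2 ∂μ1) ζ := by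
    apply hasFDerivAt_integral_of_dominated_of_fderiv_le (𝕜 := ℝ)
      (F := fun w x =>
        Real.log (∫ y, Real.exp ((∑ a, w a * f y a) - ε⁻¹ * c (x, y)) ∂μ2))
      (F' := fun w x =>
        (∫ y, Real.exp ((∑ a, w a * f y a) - ε⁻¹ * c (x, y)) ∂μ2)⁻¹ •
          ∫ y, Real.exp ((∑ a, w a * f y a) - ε⁻¹ * c (x, y)) • linL (f y) ∂μ2)
      (bound := fun _ => Real.exp (A * M * (‖ζ‖ + 1) + ε⁻¹ * C) *
        (Real.exp (A * M * (‖ζ‖ + 1)) * (A * M))) (Metric.ball_mem_nhds _ one_pos)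
    · refine Filter.Eventually.of_forall fun w => ?_
      exact ((hFicont w).log (fun x => (hFipos w x).ne')).aestronglyMeasurable
    · exact cont_integrable ((hFicont ζ).log (fun x => (hFipos ζ x).ne'))
    · exact (((hFicont ζ).inv₀ (fun x => (hFipos ζ x).ne')).smul (hDcont ζ)).aestronglyMeasurable
    · refine Filter.Eventually.of_forall fun x => fun w' hw' => ?_
      have hw'n : ‖w'‖ ≤ ‖ζ‖ + 1 := by
        have h1 : ‖w' - ζ‖ < 1 := by simpa [dist_eq_norm] using hw'
        have h2 := norm_sub_norm_le w' ζ
        linarith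
      rw [norm_smul_clm, abs_of_pos (inv_pos.mpr (hFipos w' x))]
      have hinv : (∫ y, Real.exp ((∑ a, w' a * f y a) - ε⁻¹ * c (x, y)) ∂μ2)⁻¹ ≤
          Real.exp (A * M * (‖ζ‖ + 1) + ε⁻¹ * C) := by
        have h1 : (∫ y, Real.exp ((∑ a, w' a * f y a) - ε⁻¹ * c (x, y)) ∂μ2)⁻¹ ≤
            (Real.exp (-(A * M * ‖w'‖) - ε⁻¹ * C))⁻¹ :=
          inv_anti₀ (Real.exp_pos _) (hFilb w' x)
        refine h1.trans ?_
        rw [← Real.exp_neg]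
        apply Real.exp_le_exp.mpr
        have := mul_le_mul_of_nonneg_left hw'n hAM
        linarith
      have hDn : ‖∫ y, Real.exp ((∑ a, w' a * f y a) - ε⁻¹ * c (x, y)) • linL (f y) ∂μ2‖ ≤
          Real.exp (A * M * (‖ζ‖ + 1)) * (A * M) := by
        refine (hDnorm w' x).trans ?_
        refine mul_le_mul_of_nonneg_right (Real.exp_le_exp.mpr ?_) hAM
        exact mul_le_mul_of_nonneg_left hw'n hAM
      exact mul_le_mul hinv hDn (norm_nonneg _) (Real.exp_pos _).le
    · exact integrable_const _
    · refine Filter.Eventually.of_forall fun x => fun w' _ => ?_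
      exact (hFideriv w' x).log (hFipos w' x).ne'
  have hJfun : J = fun w =>
      ∫ x, Real.log (∫ y, Real.exp ((∑ a, w a * f y a) - ε⁻¹ * c (x, y)) ∂μ2) ∂μ1 :=
    funext hJ
  rw [hJfun]
  refine ⟨houter.differentiableAt, fun a => ?_⟩
  rw [houter.fderiv]
  have hGint : Integrable (fun x =>
      (∫ y, Real.exp ((∑ a, ζ a * f y a) - ε⁻¹ * c (x, y)) ∂μ2)⁻¹ •
        ∫ y, Real.exp ((∑ a, ζ a * f y a) - ε⁻¹ * c (x, y)) • linL (f y) ∂μ2) μ1 :=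
    cont_integrable (((hFicont ζ).inv₀ (fun x => (hFipos ζ x).ne')).smul (hDcont ζ))
  rw [ContinuousLinearMap.integral_apply hGint]
  refine integral_congr_ae (Filter.Eventually.of_forall fun x => ?_)
  beta_reduce
  -- pointwise identification with the integral against K
  rw [hK ζ x]
  have hrc : Continuous fun y =>
      Real.exp ((∑ b, ζ b * f y b) - ε⁻¹ * c (x, y)) /
        ∫ y', Real.exp ((∑ b, ζ b * f y' b) - ε⁻¹ * c (x, y')) ∂μ2 :=
    (hgcy ζ x).div_const _
  have hmeas : Measurable fun y =>
      Real.toNNReal (Real.exp ((∑ b, ζ b * f y b) - ε⁻¹ * c (x, y)) /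
        ∫ y', Real.exp ((∑ b, ζ b * f y' b) - ε⁻¹ * c (x, y')) ∂μ2) :=
    hrc.measurable.real_toNNReal
  have hwd : ∫ y, f y a ∂(μ2.withDensity (fun y => ENNReal.ofReal
      (Real.exp ((∑ b, ζ b * f y b) - ε⁻¹ * c (x, y)) /
        ∫ y', Real.exp ((∑ b, ζ b * f y' b) - ε⁻¹ * c (x, y')) ∂μ2)))
      = ∫ y, (Real.exp ((∑ b, ζ b * f y b) - ε⁻¹ * c (x, y)) /
        ∫ y', Real.exp ((∑ b, ζ b * f y' b) - ε⁻¹ * c (x, y')) ∂μ2) * f y a ∂μ2 := by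
    rw [show (fun y => ENNReal.ofReal
        (Real.exp ((∑ b, ζ b * f y b) - ε⁻¹ * c (x, y)) /
          ∫ y', Real.exp ((∑ b, ζ b * f y' b) - ε⁻¹ * c (x, y')) ∂μ2)) =
        (fun y => ((Real.toNNReal (Real.exp ((∑ b, ζ b * f y b) - ε⁻¹ * c (x, y)) /
          ∫ y', Real.exp ((∑ b, ζ b * f y' b) - ε⁻¹ * c (x, y')) ∂μ2) : ℝ≥0) : ENNReal))
        from rfl]
    rw [integral_withDensity_eq_integral_smul hmeas (fun y => f y a)]
    refine integral_congr_ae (Filter.Eventually.of_forall fun y => ?_)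
    beta_reduce
    rw [NNReal.smul_def, smul_eq_mul, Real.coe_toNNReal]
    exact div_nonneg (Real.exp_pos _).le (hFipos ζ x).le
  rw [hwd]
  rw [ContinuousLinearMap.smul_apply, smul_eq_mul, ContinuousLinearMap.integral_apply (hDint ζ x)]
  have h1 : ∀ y : Y, (Real.exp ((∑ b, ζ b * f y b) - ε⁻¹ * c (x, y)) • linL (f y))
      (Pi.single a 1) = Real.exp ((∑ b, ζ b * f y b) - ε⁻¹ * c (x, y)) * f y a := by
    intro y
    rw [ContinuousLinearMap.smul_apply, smul_eq_mul, linL_single]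
  rw [integral_congr_ae (Filter.Eventually.of_forall h1)]
  rw [show (fun y => (Real.exp ((∑ b, ζ b * f y b) - ε⁻¹ * c (x, y)) /
      ∫ y', Real.exp ((∑ b, ζ b * f y' b) - ε⁻¹ * c (x, y')) ∂μ2) * f y a) =
      (fun y => (∫ y', Real.exp ((∑ b, ζ b * f y' b) - ε⁻¹ * c (x, y')) ∂μ2)⁻¹ *
        (Real.exp ((∑ b, ζ b * f y b) - ε⁻¹ * c (x, y)) * f y a)) from
    funext fun y => by rw [div_eq_inv_mul, mul_assoc]]
  rw [integral_const_mul]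
end
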